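/- Let F be a linear ordered field equipped with its order topology, X a completely F-regular space, and A(X,F) an intermediate ring. For every f ∈ A(X,F), the intersection P_f of all minimal prime ideals of A(X,F) containing f equals {g ∈ A(X,F) : int_X Z(f) ⊆ int_X Z(g)}. -/

import Mathlib

open Set

/-- `Pz a` : the intersection of all minimal prime ideals of `R` which contain `a`. -/
def Pz {R : Type*} [CommRing R] (a : R) : Set R :=
  ⋂ P ∈ {P : Ideal R | P ∈ minimalPrimes R ∧ a ∈ P}, (P : Set R)

/-- A proper ideal `I` is a `z°`-ideal if `Pz a ⊆ I` for every `a ∈ I`. -/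
def IsZoIdeal {R : Type*} [CommRing R] (I : Ideal R) : Prop :=
  I ≠ ⊤ ∧ ∀ a ∈ I, Pz a ⊆ (I : Set R)

/-- The zero set `Z(f)` of a continuous function `f`. -/
def ZSet {X F : Type*} [TopologicalSpace X] [TopologicalSpace F] [Zero F]
    (f : C(X, F)) : Set X := {x | f x = 0}

/-- `f` is bounded over `X` (i.e. `f ∈ B(X,F)`). -/
def BddF {X F : Type*} [TopologicalSpace X] [Field F] [LinearOrder F] [IsStrictOrderedRing F] [TopologicalSpace F]
    (f : C(X, F)) : Prop := ∃ l : F, 0 < l ∧ ∀ x, |f x| ≤ l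

/-- `X` is completely `F`-regular: Hausdorff, and points can be separated from closed
sets by bounded `F`-valued continuous functions. -/
def CompletelyFRegular (X F : Type*) [TopologicalSpace X] [Field F] [LinearOrder F] [IsStrictOrderedRing F]
    [TopologicalSpace F] : Prop :=
  T2Space X ∧ ∀ K : Set X, IsClosed K → ∀ x ∉ K, ∃ f : C(X, F),
    BddF f ∧ f x = 0 ∧ ∀ k ∈ K, f k = 1

/-- `A` is an intermediate ring: a subring of `C(X,F)` containing all of `B(X,F)`. -/
def IsIntermediate {X F : Type*} [TopologicalSpace X] [Field F] [LinearOrder F] [IsStrictOrderedRing F]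
    [TopologicalSpace F] [OrderTopology F] (A : Subring C(X, F)) : Prop :=
  ∀ f : C(X, F), BddF f → f ∈ A

/-- An ideal of closed sets in `X`: a nonempty family of closed sets, closed under
finite unions and under passing to closed subsets. -/
def IsIdealOfClosedSets {X : Type*} [TopologicalSpace X] (P : Set (Set X)) : Prop :=
  P.Nonempty ∧ (∀ A ∈ P, IsClosed A) ∧ (∀ A ∈ P, ∀ B ∈ P, A ∪ B ∈ P) ∧
    ∀ C : Set X, IsClosed C → ∀ A ∈ P, C ⊆ A → C ∈ P

/-- `X` is an almost `P_F`-space: every nonempty zero set has nonempty interior. -/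
def AlmostPF (X F : Type*) [TopologicalSpace X] [Field F] [LinearOrder F] [IsStrictOrderedRing F]
    [TopologicalSpace F] : Prop :=
  ∀ f : C(X, F), (ZSet f).Nonempty → (interior (ZSet f)).Nonempty


section RingAux
variable {R : Type*} [CommRing R] [IsReduced R]

lemma exists_mul_eq_zero_of_mem_minimalPrimes
    {P : Ideal R} (hP : P ∈ minimalPrimes R) {a : R} (ha : a ∈ P) :
    ∃ c ∉ P, a * c = 0 := by
  have hPp : P.IsPrime := hP.1.1
  set S : Submonoid R :=
    { carrier := {x | ∃ n : ℕ, ∃ c, c ∉ P ∧ a ^ n * c = x}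
      mul_mem' := by
        rintro x y ⟨n, c, hc, rfl⟩ ⟨m, d, hd, rfl⟩
        exact ⟨n + m, c * d, fun h => ((hPp.mem_or_mem h).elim hc hd), by ring⟩
      one_mem' := ⟨0, 1, fun h => hPp.ne_top ((Ideal.eq_top_iff_one P).mpr h), by ring⟩ }
    with hS
  by_cases h0 : (0 : R) ∈ S
  · obtain ⟨n, c, hc, hnc⟩ := h0
    refine ⟨c, hc, IsNilpotent.eq_zero ⟨n + 1, ?_⟩⟩
    have h1 : (a * c) ^ (n + 1) = (a ^ n * c) * (a * c ^ n) := by ring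
    rw [h1, hnc, zero_mul]
  · exfalso
    have hdisj : Disjoint ((⊥ : Ideal R) : Set R) (S : Set R) := by
      rw [Set.disjoint_left]
      rintro x hx
      simp only [SetLike.mem_coe, Ideal.mem_bot] at hx
      subst hx
      exact h0
    obtain ⟨p, hp, -, hpd⟩ := Ideal.exists_le_prime_disjoint _ S hdisj
    have hpP : p ≤ P := by
      intro x hx
      by_contra hxP
      exact Set.disjoint_left.mp hpd hx ⟨0, x, hxP, by ring⟩
    have haS : a ∈ S := ⟨1, 1, fun h => hPp.ne_top ((Ideal.eq_top_iff_one P).mpr h), by ring⟩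
    have hap : a ∉ p := fun h => Set.disjoint_left.mp hpd h haS
    exact hap (hP.2 ⟨hp, bot_le⟩ hpP ha)

lemma Pz_eq_ann (a : R) :
    Pz a = {b | ∀ c, c * a = 0 → c * b = 0} := by
  ext b
  simp only [Pz, Set.mem_iInter, Set.mem_setOf_eq, SetLike.mem_coe]
  constructor
  · intro hb c hca
    by_contra hcb
    have hcb' : c * b ∉ nilradical R := by
      rw [nilradical_eq_zero, Ideal.zero_eq_bot, Ideal.mem_bot]
      exact hcb
    rw [nilradical_eq_sInf, Submodule.mem_sInf] at hcb'
    push_neg at hcb'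
    obtain ⟨Q, hQ, hcbQ⟩ := hcb'
    haveI : Ideal.IsPrime Q := hQ
    obtain ⟨p, hp, hpQ⟩ := Ideal.exists_minimalPrimes_le (I := ⊥) bot_le (J := Q)
    have hpp : p.IsPrime := hp.1.1
    have hcbp : c * b ∉ p := fun h => hcbQ (hpQ h)
    have hcp : c ∉ p := fun h => hcbp (p.mul_mem_right _ h)
    have hbp : b ∉ p := fun h => hcbp (p.mul_mem_left _ h)
    have hap : a ∈ p := by
      rcases hpp.mem_or_mem (show c * a ∈ p by rw [hca]; exact p.zero_mem) with h | h
      · exact absurd h hcp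
      · exact h
    exact hbp (hb p ⟨hp, hap⟩)
  · rintro hb P ⟨hP, haP⟩
    obtain ⟨c, hc, hac⟩ := exists_mul_eq_zero_of_mem_minimalPrimes hP haP
    have : c * b = 0 := hb c (by rw [mul_comm]; exact hac)
    rcases hP.1.1.mem_or_mem (show c * b ∈ P by rw [this]; exact P.zero_mem) with h | h
    · exact absurd h hc
    · exact h

end RingAux


/-- For f in an intermediate ring A(X,F), P_f equals the set of g with
int_X Z(f) ⊆ int_X Z(g). -/
theorem stmt1 {X F : Type*} [TopologicalSpace X] [Field F] [LinearOrder F] [IsStrictOrderedRing F]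
    [TopologicalSpace F] [OrderTopology F]
    (hX : CompletelyFRegular X F)
    (A : Subring C(X, F)) (hA : IsIntermediate A)
    (f : A) :
    Pz f = {g : A | interior (ZSet (f : C(X, F))) ⊆ interior (ZSet (g : C(X, F)))} := by
  haveI : IsReduced A := by
    constructor
    rintro x ⟨n, hn⟩
    have hn' : ((x : C(X, F))) ^ n = 0 := by
      have := congrArg (Subtype.val) hn
      simpa using this
    ext1
    ext t
    have ht := congrArg (fun u : C(X, F) => u t) hn'
    simp only [ContinuousMap.pow_apply, ContinuousMap.zero_apply] at ht
    show (x : C(X, F)) t = (0 : C(X, F)) t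
    rw [ContinuousMap.zero_apply]
    rcases Nat.eq_zero_or_pos n with rfl | hn0
    · simp at ht
    · exact (pow_eq_zero_iff hn0.ne').mp ht
  rw [Pz_eq_ann]
  ext g
  simp only [Set.mem_setOf_eq]
  constructor
  · -- g annihilates ann(f) → int Z f ⊆ int Z g
    intro hg
    have hsub : interior (ZSet (f : C(X, F))) ⊆ ZSet (g : C(X, F)) := by
      intro x hxf
      by_contra hgx
      have hgx' : (g : C(X, F)) x ≠ 0 := hgx
      obtain ⟨h, hhb, hhx, hhK⟩ := hX.2 (interior (ZSet (f : C(X, F))))ᶜ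
        isOpen_interior.isClosed_compl x (by simpa using hxf)
      have hcA : (1 : C(X, F)) - h ∈ A := A.sub_mem A.one_mem (hA h hhb)
      set c : A := ⟨(1 : C(X, F)) - h, hcA⟩ with hc
      have hcf : c * f = 0 := by
        ext1
        ext t
        simp only [Subring.coe_mul, ZeroMemClass.coe_zero, ContinuousMap.mul_apply,
          ContinuousMap.zero_apply, ContinuousMap.sub_apply, ContinuousMap.one_apply]
        by_cases ht : t ∈ interior (ZSet (f : C(X, F)))
        · have h0 : t ∈ ZSet (f : C(X, F)) := interior_subset ht
          have : (f : C(X, F)) t = 0 := h0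
          simp [this]
        · have : h t = 1 := hhK t ht
          simp [hc, this]
      have := congrArg (fun u : A => (u : C(X, F)) x) (hg c hcf)
      simp only [Subring.coe_mul, ZeroMemClass.coe_zero, ContinuousMap.mul_apply,
        ContinuousMap.zero_apply, ContinuousMap.sub_apply, ContinuousMap.one_apply, hc,
        hhx, sub_zero, one_mul] at this
      exact hgx' this
    exact interior_maximal hsub isOpen_interior
  · -- int Z f ⊆ int Z g → g annihilates ann(f)
    intro hg c hcf
    have hcf' : ∀ t, (c : C(X, F)) t * (f : C(X, F)) t = 0 := by
      intro t
      have := congrArg (fun u : A => (u : C(X, F)) t) hcf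
      simpa using this
    have hcoz : {t | (c : C(X, F)) t ≠ 0} ⊆ ZSet (g : C(X, F)) := by
      have hopen : IsOpen {t | (c : C(X, F)) t ≠ 0} :=
        isOpen_compl_iff.mpr (isClosed_singleton.preimage (c : C(X, F)).continuous)
      have h1 : {t | (c : C(X, F)) t ≠ 0} ⊆ ZSet (f : C(X, F)) := by
        intro t ht
        have := hcf' t
        rcases mul_eq_zero.mp this with h | h
        · exact absurd h ht
        · exact h
      have h2 : {t | (c : C(X, F)) t ≠ 0} ⊆ interior (ZSet (f : C(X, F))) :=
        interior_maximal h1 hopen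
      exact (h2.trans hg).trans interior_subset
    ext1
    ext t
    simp only [Subring.coe_mul, ZeroMemClass.coe_zero, ContinuousMap.mul_apply,
      ContinuousMap.zero_apply]
    by_cases ht : (c : C(X, F)) t = 0
    · simp [ht]
    · have : (g : C(X, F)) t = 0 := hcoz ht
      simp [this]
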